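/- arXiv:1003.3589 — 16 statements merged into one kernel-verified Lean document; each statement's English description precedes it below -/
import Mathlib

section
/- Let n > 1, let f : ℝⁿ → ℝⁿ be a vector field, and let H : ℝⁿ → ℝ be differentiable with f(x) · ∇H(x) = 0 for all x ∈ ℝⁿ (i.e., H is a first integral of f). Then there exists a function S assigning to each point x of the set {x : ∇H(x) ≠ 0} a skew-symmetric n×n real matrix S(x) such that f(x) = S(x) ∇H(x) for every x with ∇H(x) ≠ 0. -/
/-- McLachlan et al. 1999: if `H` is a differentiable first integral of the vector
field `f` on `ℝⁿ` (`n > 1`), i.e. `f x · ∇H x = 0` for all `x`, then there is a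
skew-symmetric matrix function `S` on `{x : ∇H x ≠ 0}` with `f x = S x ∇H x` there. -/
theorem stmt_0 (n : ℕ) (hn : 1 < n)
    (f : (Fin n → ℝ) → (Fin n → ℝ)) (H : (Fin n → ℝ) → ℝ)
    (hH : Differentiable ℝ H)
    (hfirst : ∀ x : Fin n → ℝ, ∑ i, f x i * fderiv ℝ H x (Pi.single i 1) = 0) :
    ∃ S : (Fin n → ℝ) → Matrix (Fin n) (Fin n) ℝ,
      ∀ x : Fin n → ℝ,
        (fun i => fderiv ℝ H x (Pi.single i 1)) ≠ (0 : Fin n → ℝ) →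
          (S x).transpose = -(S x) ∧
          (S x).mulVec (fun i => fderiv ℝ H x (Pi.single i 1)) = f x := by
  set g : (Fin n → ℝ) → (Fin n → ℝ) := fun x i => fderiv ℝ H x (Pi.single i 1) with hg
  refine ⟨fun x => (∑ i, g x i * g x i)⁻¹ •
      (Matrix.vecMulVec (f x) (g x) - Matrix.vecMulVec (g x) (f x)), fun x hx => ?_⟩
  have hne : (∑ i, g x i * g x i) ≠ 0 := by
    intro h
    apply hx
    funext i
    have hnn : ∀ j ∈ Finset.univ, 0 ≤ g x j * g x j := fun j _ => mul_self_nonneg _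
    have := (Finset.sum_eq_zero_iff_of_nonneg hnn).mp h i (Finset.mem_univ i)
    have : g x i = 0 := by nlinarith [this]
    simpa using this
  constructor
  · ext i j
    simp [Matrix.transpose, Matrix.vecMulVec, mul_comm]
    ring
  · funext i
    have hfg : ∑ j, f x j * g x j = 0 := hfirst x
    simp only [Matrix.mulVec, dotProduct, Matrix.smul_apply, Matrix.sub_apply,
      Matrix.vecMulVec_apply, smul_eq_mul]
    have : ∑ j, (∑ k, g x k * g x k)⁻¹ * (f x i * g x j - g x i * f x j) * g x j
        = (∑ k, g x k * g x k)⁻¹ *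
          (f x i * ∑ j, g x j * g x j - g x i * ∑ j, f x j * g x j) := by
      conv_rhs => rw [Finset.mul_sum (f := fun j => g x j * g x j),
        Finset.mul_sum (f := fun j => f x j * g x j), ← Finset.sum_sub_distrib,
        Finset.mul_sum]
      refine Finset.sum_congr rfl fun j _ => by ring
    rw [this, hfg]
    field_simp
    have hne2 : ∑ j, g x j ^ 2 ≠ 0 := by simpa [sq] using hne
    rw [mul_zero, sub_zero, mul_div_cancel_left₀ _ hne2]
end

section
/- Suppose a₁₂ ≠ 0 and a₂₁ ≠ 0, and let A, B : (0,∞) → ℝ be differentiable nowhere-vanishing functions such that for all x₁ > 0 and x₂ > 0: (A'(x₁)/A(x₁))·a₁₂·x₁·x₂ + (B'(x₂)/B(x₂))·a₂₁·x₁·x₂ + F(x₁) + G(x₂) = 0, where F(x₁) = (A'(x₁)/A(x₁))·(b₁x₁ + a₁₁x₁² + e₁) + b₁ + 2a₁₁x₁ + a₂₁x₁ and G(x₂) = (B'(x₂)/B(x₂))·(b₂x₂ + a₂₂x₂² + e₂) + b₂ + 2a₂₂x₂ + a₁₂x₂. Then there exist real constants α, β, γ, c₁ ≠ 0, c₂ ≠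 0 such that A(x₁) = c₁·exp(αx₁/a₁₂)·x₁^(β/a₁₂) for all x₁ > 0 and B(x₂) = c₂·exp(−αx₂/a₂₁)·x₂^(γ/a₂₁) for all x₂ > 0. -/
/-- Auxiliary ODE lemma: if `A' * (a*x) = (k*x + r) * A` on `(0,∞)` with `A` nonvanishing
and differentiable, then `A x = c * exp (k*x/a) * x^(r/a)` for some `c ≠ 0`. -/
lemma ode_aux (a k r : ℝ) (ha : a ≠ 0) (A : ℝ → ℝ)
    (hA : ∀ x > (0 : ℝ), DifferentiableAt ℝ A x)
    (hA0 : ∀ x > (0 : ℝ), A x ≠ 0)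
    (hder : ∀ x > (0 : ℝ), deriv A x * (a * x) = (k * x + r) * A x) :
    ∃ c : ℝ, c ≠ 0 ∧ ∀ x > (0 : ℝ), A x = c * Real.exp (k * x / a) * x ^ (r / a) := by
  set K := k / a with hK
  set R := r / a with hR
  have hder' : ∀ x > (0 : ℝ), deriv A x = (K + R / x) * A x := by
    intro x hx
    have h := hder x hx
    have hx0 : x ≠ 0 := ne_of_gt hx
    rw [hK, hR, div_div, div_add_div _ _ ha (mul_ne_zero ha hx0), div_mul_eq_mul_div,
      eq_div_iff (mul_ne_zero ha (mul_ne_zero ha hx0))]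
    linear_combination a * h
  set h : ℝ → ℝ := fun x => A x * (Real.exp (-K * x) * x ^ (-R)) with hh
  have hd : ∀ x ∈ Set.Ioi (0 : ℝ), HasDerivAt h 0 x := by
    intro x hx
    have hx' : (0 : ℝ) < x := hx
    have hx0 : x ≠ 0 := ne_of_gt hx'
    have h1 : HasDerivAt A (deriv A x) x := (hA x hx').hasDerivAt
    have h2 : HasDerivAt (fun y : ℝ => Real.exp (-K * y)) (Real.exp (-K * x) * (-K)) x := by
      have := ((hasDerivAt_id x).const_mul (-K)).exp
      simp only [id_eq, mul_one] at this
      exact this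
    have h3 : HasDerivAt (fun y : ℝ => y ^ (-R)) (-R * x ^ (-R - 1)) x :=
      Real.hasDerivAt_rpow_const (Or.inl hx0)
    have h4 := h1.mul (h2.mul h3)
    have hsub : x ^ (-R - 1) = x ^ (-R) / x := by
      rw [Real.rpow_sub hx', Real.rpow_one]
    convert h4 using 1
    rotate_left 3
    rw [hder' x hx', hsub, Pi.mul_apply]
    field_simp
    ring
    all_goals rfl
  have hconst : ∀ x ∈ Set.Ioi (0 : ℝ), h x = h 1 := by
    intro x hx
    have := Convex.norm_image_sub_le_of_norm_hasDerivWithin_le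
      (f := h) (f' := fun _ => (0 : ℝ)) (C := 0) (s := Set.Ioi (0 : ℝ))
      (fun y hy => (hd y hy).hasDerivWithinAt) (fun y _ => by simp)
      (convex_Ioi 0) (Set.mem_Ioi.2 one_pos) hx
    simp only [zero_mul, norm_le_zero_iff, sub_eq_zero] at this
    exact this
  refine ⟨h 1, ?_, ?_⟩
  · have h1 : (1 : ℝ) > 0 := one_pos
    simp only [hh, Real.one_rpow]
    exact mul_ne_zero (hA0 1 h1) (by positivity)
  · intro x hx
    have hx0 : x ≠ 0 := ne_of_gt hx
    have hcx := hconst x hx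
    have hE : Real.exp (-K * x) ≠ 0 := Real.exp_ne_zero _
    have hP : x ^ (-R) ≠ 0 := (Real.rpow_pos_of_pos hx _).ne'
    have hAx : A x = h 1 * Real.exp (K * x) * x ^ R := by
      have hEE : Real.exp (-K * x) * Real.exp (K * x) = 1 := by
        rw [← Real.exp_add]; ring_nf; exact Real.exp_zero
      have hPP : x ^ (-R) * x ^ R = 1 := by
        rw [← Real.rpow_add hx]; simp
      have : A x * (Real.exp (-K * x) * x ^ (-R)) = h 1 := hcx
      calc A x = A x * ((Real.exp (-K * x) * Real.exp (K * x)) *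
            (x ^ (-R) * x ^ R)) := by rw [hEE, hPP]; ring
        _ = (A x * (Real.exp (-K * x) * x ^ (-R))) * (Real.exp (K * x) * x ^ R) := by ring
        _ = h 1 * Real.exp (K * x) * x ^ R := by rw [this]; ring
    rw [hAx, hK, hR, div_mul_eq_mul_div]

/-- Lemma 1 of the paper: the separable integrating factor condition forces
`A` and `B` to be of exponential-power form. -/
theorem stmt_1 (b1 b2 a11 a12 a21 a22 e1 e2 : ℝ)
    (h12 : a12 ≠ 0) (h21 : a21 ≠ 0)
    (A B : ℝ → ℝ)
    (hA : ∀ x > (0 : ℝ), DifferentiableAt ℝ A x)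
    (hB : ∀ x > (0 : ℝ), DifferentiableAt ℝ B x)
    (hA0 : ∀ x > (0 : ℝ), A x ≠ 0)
    (hB0 : ∀ x > (0 : ℝ), B x ≠ 0)
    (heq : ∀ x1 > (0 : ℝ), ∀ x2 > (0 : ℝ),
      (deriv A x1 / A x1) * a12 * x1 * x2 + (deriv B x2 / B x2) * a21 * x1 * x2
        + ((deriv A x1 / A x1) * (b1 * x1 + a11 * x1 ^ 2 + e1)
            + b1 + 2 * a11 * x1 + a21 * x1)
        + ((deriv B x2 / B x2) * (b2 * x2 + a22 * x2 ^ 2 + e2)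
            + b2 + 2 * a22 * x2 + a12 * x2) = 0) :
    ∃ α β γ c1 c2 : ℝ, c1 ≠ 0 ∧ c2 ≠ 0 ∧
      (∀ x1 > (0 : ℝ), A x1 = c1 * Real.exp (α * x1 / a12) * x1 ^ (β / a12)) ∧
      (∀ x2 > (0 : ℝ), B x2 = c2 * Real.exp (-α * x2 / a21) * x2 ^ (γ / a21)) := by
  have h1p : (1 : ℝ) > 0 := one_pos
  have h2p : (2 : ℝ) > 0 := two_pos
  set α : ℝ := (deriv B 1 / B 1) * a21 * 1 - (deriv B 2 / B 2) * a21 * 2 with hα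
  set β : ℝ := ((deriv B 1 / B 1) * (b2 * 1 + a22 * 1 ^ 2 + e2) + b2 + 2 * a22 * 1 + a12 * 1)
    - ((deriv B 2 / B 2) * (b2 * 2 + a22 * 2 ^ 2 + e2) + b2 + 2 * a22 * 2 + a12 * 2) with hβ
  set γ : ℝ := ((deriv A 1 / A 1) * (b1 * 1 + a11 * 1 ^ 2 + e1) + b1 + 2 * a11 * 1 + a21 * 1)
    - ((deriv A 2 / A 2) * (b1 * 2 + a11 * 2 ^ 2 + e1) + b1 + 2 * a11 * 2 + a21 * 2) with hγ
  have hφ : ∀ x > (0 : ℝ), (deriv A x / A x) * a12 * x = α * x + β := by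
    intro x hx
    linear_combination (heq x hx 2 h2p) - (heq x hx 1 h1p)
  have hψ : ∀ x > (0 : ℝ), (deriv B x / B x) * a21 * x = -α * x + γ := by
    intro x hx
    linear_combination (heq 2 h2p x hx) - (heq 1 h1p x hx) + x * (hφ 1 h1p) - x * (hφ 2 h2p)
  have hderA : ∀ x > (0 : ℝ), deriv A x * (a12 * x) = (α * x + β) * A x := by
    intro x hx
    have h := hφ x hx
    have hx0 : x ≠ 0 := ne_of_gt hx
    have hAx := hA0 x hx
    field_simp [hAx] at h
    linear_combination h
  have hderB : ∀ x > (0 : ℝ), deriv B x * (a21 * x) = (-α * x + γ) * B x := by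
    intro x hx
    have h := hψ x hx
    have hx0 : x ≠ 0 := ne_of_gt hx
    have hBx := hB0 x hx
    field_simp [hBx] at h
    linear_combination h
  obtain ⟨c1, hc1, hAeq⟩ := ode_aux a12 α β h12 A hA hA0 hderA
  obtain ⟨c2, hc2, hBeq⟩ := ode_aux a21 (-α) γ h21 B hB hB0 hderB
  exact ⟨α, β, γ, c1, c2, hc1, hc2, hAeq, hBeq⟩
end

section
/- Suppose the real parameters satisfy b₁ + b₂ = 0, 2a₁₁ + a₂₁ = 0 and a₁₂ + 2a₂₂ = 0 (with e₁, e₂ arbitrary). Then the function H(x₁,x₂) = b₁x₁x₂ + a₁₁x₁²x₂ − a₂₂x₁x₂² + e₁x₂ − e₂x₁ is a first integral of the two-dimensional Lotka–Volterra system with constant terms on all of ℝ²: f₁·∂H/∂x₁ + f₂·∂H/∂x₂ = 0 at every point of ℝ². -/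
/-- Case `e₁, e₂ ≠ 0` (here `e₁,e₂` arbitrary): under the conditions
`b₁+b₂ = 0`, `2a₁₁+a₂₁ = 0`, `a₁₂+2a₂₂ = 0`, the function
`H = b₁x₁x₂ + a₁₁x₁²x₂ − a₂₂x₁x₂² + e₁x₂ − e₂x₁` is a first integral on `ℝ²`. -/
theorem stmt_2 (b1 b2 a11 a12 a21 a22 e1 e2 : ℝ)
    (h1 : b1 + b2 = 0) (h2 : 2 * a11 + a21 = 0) (h3 : a12 + 2 * a22 = 0) :
    ∀ x1 x2 : ℝ,
      (x1 * (b1 + a11 * x1 + a12 * x2) + e1) *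
        deriv (fun t => b1 * t * x2 + a11 * t ^ 2 * x2 - a22 * t * x2 ^ 2
          + e1 * x2 - e2 * t) x1 +
      (x2 * (b2 + a21 * x1 + a22 * x2) + e2) *
        deriv (fun t => b1 * x1 * t + a11 * x1 ^ 2 * t - a22 * x1 * t ^ 2
          + e1 * t - e2 * x1) x2 = 0 := by
  intro x1 x2
  have d1 : HasDerivAt (fun t : ℝ => b1 * t * x2 + a11 * t ^ 2 * x2 - a22 * t * x2 ^ 2
      + e1 * x2 - e2 * t) (b1 * x2 + a11 * (2 * x1) * x2 - a22 * x2 ^ 2 - e2) x1 := by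
    have h := (((((hasDerivAt_id x1).const_mul b1).mul_const x2).add
        (((hasDerivAt_pow 2 x1).const_mul a11).mul_const x2)).sub
        (((hasDerivAt_id x1).const_mul a22).mul_const (x2 ^ 2))).add_const (e1 * x2)
    have h2 := h.sub ((hasDerivAt_id x1).const_mul e2)
    refine h2.congr_deriv ?_
    push_cast; ring
  have d2 : HasDerivAt (fun t : ℝ => b1 * x1 * t + a11 * x1 ^ 2 * t - a22 * x1 * t ^ 2
      + e1 * t - e2 * x1) (b1 * x1 + a11 * x1 ^ 2 - a22 * x1 * (2 * x2) + e1) x2 := by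
    have h := (((((hasDerivAt_id x2).const_mul (b1 * x1)).add
        ((hasDerivAt_id x2).const_mul (a11 * x1 ^ 2))).sub
        ((hasDerivAt_pow 2 x2).const_mul (a22 * x1))).add
        ((hasDerivAt_id x2).const_mul e1)).sub_const (e2 * x1)
    refine h.congr_deriv ?_
    push_cast; ring
  rw [d1.deriv, d2.deriv]
  have hb : b2 = -b1 := by linarith
  have ha21 : a21 = -(2 * a11) := by linarith
  have ha12 : a12 = -(2 * a22) := by linarith
  subst hb ha21 ha12
  ring
end

section
/- Suppose e₂ = 0, a₂₁ ≠ 0, and the real parameters satisfy 2a₁₁a₂₂/a₂₁ − a₂₂ − a₁₂ = 0 and 2b₂a₁₁ − b₁a₂₁ = 0. Set l₂ = −2a₁₁/a₂₁ and suppose l₂ ≠ 0. Then the function H(x₁,x₂) = x₂^(l₂)·(−b₂x₁ − (a₂₁/2)x₁² − a₂₂x₁x₂ + e₁/l₂) is a first integral of the two-dimensional Lotka–Volterra system with constant terms on the open set {(x₁,x₂) ∈ ℝ² : x₂ > 0}. -/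
/-- Case `e₁ ≠ 0, e₂ = 0` with `l₂ = −2a₁₁/a₂₁ ≠ 0`:
`H = x₂^{l₂}(−b₂x₁ − (a₂₁/2)x₁² − a₂₂x₁x₂ + e₁/l₂)` is a first integral on `{x₂ > 0}`. -/
theorem stmt_3 (b1 b2 a11 a12 a21 a22 e1 e2 l2 : ℝ)
    (he2 : e2 = 0) (h21 : a21 ≠ 0)
    (hc1 : 2 * a11 * a22 / a21 - a22 - a12 = 0)
    (hc2 : 2 * b2 * a11 - b1 * a21 = 0)
    (hl2 : l2 = -2 * a11 / a21) (hl2ne : l2 ≠ 0) :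
    ∀ x1 x2 : ℝ, 0 < x2 →
      (x1 * (b1 + a11 * x1 + a12 * x2) + e1) *
        deriv (fun t => x2 ^ l2 *
          (-b2 * t - a21 / 2 * t ^ 2 - a22 * t * x2 + e1 / l2)) x1 +
      (x2 * (b2 + a21 * x1 + a22 * x2) + e2) *
        deriv (fun t => t ^ l2 *
          (-b2 * x1 - a21 / 2 * x1 ^ 2 - a22 * x1 * t + e1 / l2)) x2 = 0 := by
  intro x1 x2 hx2
  have hd1 : HasDerivAt (fun t => x2 ^ l2 *
      (-b2 * t - a21 / 2 * t ^ 2 - a22 * t * x2 + e1 / l2))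
      (x2 ^ l2 * (-b2 - a21 / 2 * (2 * x1) - a22 * x2)) x1 := by
    have : HasDerivAt (fun t : ℝ => -b2 * t - a21 / 2 * t ^ 2 - a22 * t * x2 + e1 / l2)
        (-b2 - a21 / 2 * (2 * x1) - a22 * x2) x1 := by
      have h1 : HasDerivAt (fun t : ℝ => -b2 * t) (-b2) x1 := by
        simpa using (hasDerivAt_id x1).const_mul (-b2)
      have h2 : HasDerivAt (fun t : ℝ => a21 / 2 * t ^ 2) (a21 / 2 * (2 * x1)) x1 := by
        have := (hasDerivAt_pow 2 x1).const_mul (a21 / 2)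
        simpa [mul_comm] using this
      have h3 : HasDerivAt (fun t : ℝ => a22 * t * x2) (a22 * x2) x1 := by
        have : HasDerivAt (fun t : ℝ => a22 * x2 * t) (a22 * x2) x1 := by
          simpa using (hasDerivAt_id x1).const_mul (a22 * x2)
        convert this using 2 with t; ring
      simpa using ((h1.sub h2).sub h3).add_const (e1 / l2)
    simpa using this.const_mul (x2 ^ l2)
  have hd2 : HasDerivAt (fun t => t ^ l2 *
      (-b2 * x1 - a21 / 2 * x1 ^ 2 - a22 * x1 * t + e1 / l2))
      (l2 * x2 ^ (l2 - 1) * (-b2 * x1 - a21 / 2 * x1 ^ 2 - a22 * x1 * x2 + e1 / l2)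
        + x2 ^ l2 * (-(a22 * x1))) x2 := by
    have hp : HasDerivAt (fun t : ℝ => t ^ l2) (l2 * x2 ^ (l2 - 1)) x2 :=
      Real.hasDerivAt_rpow_const (Or.inl hx2.ne')
    have hq : HasDerivAt (fun t : ℝ => -b2 * x1 - a21 / 2 * x1 ^ 2 - a22 * x1 * t + e1 / l2)
        (-(a22 * x1)) x2 := by
      have h3 : HasDerivAt (fun t : ℝ => a22 * x1 * t) (a22 * x1) x2 := by
        simpa using (hasDerivAt_id x2).const_mul (a22 * x1)
      simpa using (((hasDerivAt_const x2 (-b2 * x1 - a21 / 2 * x1 ^ 2)).sub h3).add_const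
        (e1 / l2))
    simpa using hp.fun_mul hq
  rw [hd1.deriv, hd2.deriv]
  have hpow : x2 ^ (l2 - 1) * x2 = x2 ^ l2 := by
    rw [← Real.rpow_add_one hx2.ne' (l2 - 1)]; ring_nf
  have hl2' : l2 * a21 = -2 * a11 := by rw [hl2]; field_simp
  have ha11 : a11 = -(l2 * a21) / 2 := by linarith
  have ha12 : a12 = -l2 * a22 - a22 := by
    have h := hc1
    field_simp at h
    have : a12 * a21 = (-l2 * a22 - a22) * a21 := by linear_combination -h + a22 * hl2' 
    exact mul_right_cancel₀ h21 this
  have hb1 : b1 = -l2 * b2 := by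
    have : b1 * a21 = (-l2 * b2) * a21 := by linear_combination -hc2 + b2 * hl2' 
    exact mul_right_cancel₀ h21 this
  obtain ⟨c, hc⟩ : ∃ c, e1 = l2 * c := ⟨e1 / l2, by field_simp⟩
  have hcd : e1 / l2 = c := by rw [hc]; field_simp
  subst he2
  rw [hcd, hc, ha12, hb1, ha11]
  have h1 : (x2 * (b2 + a21 * x1 + a22 * x2) + 0) *
      (l2 * x2 ^ (l2 - 1) * (-b2 * x1 - a21 / 2 * x1 ^ 2 - a22 * x1 * x2 + c)
        + x2 ^ l2 * (-(a22 * x1)))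
      = (b2 + a21 * x1 + a22 * x2) *
      (l2 * x2 ^ l2 * (-b2 * x1 - a21 / 2 * x1 ^ 2 - a22 * x1 * x2 + c))
        + x2 * x2 ^ l2 * (b2 + a21 * x1 + a22 * x2) * (-(a22 * x1)) := by
    rw [← hpow]; ring
  rw [h1]
  ring
end

section
/- Suppose e₂ = 0, a₂₁ ≠ 0, a₁₁ = 0, b₁ = 0 and a₁₂ + a₂₂ = 0 (these are the conditions 2a₁₁a₂₂/a₂₁ − a₂₂ − a₁₂ = 0 and 2b₂a₁₁ − b₁a₂₁ = 0 in the case l₂ = −2a₁₁/a₂₁ = 0). Then the function H(x₁,x₂) = −b₂x₁ − (a₂₁/2)x₁² − a₂₂x₁x₂ + e₁·ln x₂ is a first integral of the two-dimensional Lotka–Volterra system with constant terms on the open set {(x₁,x₂) ∈ ℝ² : x₂ > 0}. -/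
/-- Case `e₁ ≠ 0, e₂ = 0` with `l₂ = 0`:
`H = −b₂x₁ − (a₂₁/2)x₁² − a₂₂x₁x₂ + e₁ ln x₂` is a first integral on `{x₂ > 0}`. -/
theorem stmt_4 (b1 b2 a11 a12 a21 a22 e1 e2 : ℝ)
    (he2 : e2 = 0) (h21 : a21 ≠ 0) (h11 : a11 = 0) (hb1 : b1 = 0)
    (hsum : a12 + a22 = 0) :
    ∀ x1 x2 : ℝ, 0 < x2 →
      (x1 * (b1 + a11 * x1 + a12 * x2) + e1) *
        deriv (fun t => -b2 * t - a21 / 2 * t ^ 2 - a22 * t * x2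
          + e1 * Real.log x2) x1 +
      (x2 * (b2 + a21 * x1 + a22 * x2) + e2) *
        deriv (fun t => -b2 * x1 - a21 / 2 * x1 ^ 2 - a22 * x1 * t
          + e1 * Real.log t) x2 = 0 := by
  intro x1 x2 hx2
  have h1 : HasDerivAt (fun t => -b2 * t - a21 / 2 * t ^ 2 - a22 * t * x2
      + e1 * Real.log x2) (-b2 - a21 * x1 - a22 * x2) x1 := by
    have : HasDerivAt (fun t => -b2 * t - a21 / 2 * t ^ 2 - a22 * t * x2
        + e1 * Real.log x2)
        (-b2 * 1 - a21 / 2 * (2 * x1 ^ 1 * 1) - a22 * 1 * x2) x1 := by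
      simpa using ((((hasDerivAt_id x1).const_mul (-b2)).sub
        (((hasDerivAt_id x1).pow 2).const_mul (a21 / 2))).sub
        (((hasDerivAt_id x1).const_mul a22).mul_const x2)).add_const
        (e1 * Real.log x2)
    convert this using 1; ring
  have h2 : HasDerivAt (fun t => -b2 * x1 - a21 / 2 * x1 ^ 2 - a22 * x1 * t
      + e1 * Real.log t) (-(a22 * x1) + e1 / x2) x2 := by
    have hlog : HasDerivAt Real.log x2⁻¹ x2 := Real.hasDerivAt_log hx2.ne'
    have : HasDerivAt (fun t => -b2 * x1 - a21 / 2 * x1 ^ 2 - a22 * x1 * t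
        + e1 * Real.log t) (0 - 0 - a22 * x1 * 1 + e1 * x2⁻¹) x2 := by
      exact (((hasDerivAt_const x2 (-b2 * x1)).sub
        (hasDerivAt_const x2 (a21 / 2 * x1 ^ 2))).sub
        ((hasDerivAt_id x2).const_mul (a22 * x1))).add (hlog.const_mul e1)
    convert this using 1
    field_simp
    ring
  rw [h1.deriv, h2.deriv, he2, h11, hb1]
  have h12 : a12 = -a22 := by linarith
  rw [h12]
  field_simp
  ring
end

section
/- Suppose e₁ = e₂ = 0, a₁₁a₂₂ − a₁₂a₂₁ ≠ 0, and the parameters satisfy the solvability condition b₁a₂₂(a₂₁ − a₁₁) + b₂a₁₁(a₁₂ − a₂₂) = 0. Set l₁ = a₂₂(a₂₁ − a₁₁)/(a₁₁a₂₂ − a₁₂a₂₁) and l₂ = a₁₁(a₁₂ − a₂₂)/(a₁₁a₂₂ − a₁₂a₂₁), and suppose l₁ ≠ 0 and l₂ ≠ 0. Then the function H(x₁,x₂) = x₁^(l₁)·x₂^(l₂)·(b₁/l₂ + (a₁₁/l₂)x₁ − (a₂₂/l₁)x₂) is a first integral of the two-dimensional Lotka–Volterra system with constant terms on the open positive quadrant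 {(x₁,x₂) : x₁ > 0, x₂ > 0}. -/
/-- Case `e₁ = e₂ = 0`, `A` of maximal rank, `l₁, l₂ ≠ 0`:
`H = x₁^{l₁} x₂^{l₂} (b₁/l₂ + (a₁₁/l₂)x₁ − (a₂₂/l₁)x₂)` is a first integral on the
positive quadrant. -/
theorem stmt_5 (b1 b2 a11 a12 a21 a22 e1 e2 l1 l2 : ℝ)
    (he1 : e1 = 0) (he2 : e2 = 0)
    (hdet : a11 * a22 - a12 * a21 ≠ 0)
    (hsolv : b1 * a22 * (a21 - a11) + b2 * a11 * (a12 - a22) = 0)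
    (hl1 : l1 = a22 * (a21 - a11) / (a11 * a22 - a12 * a21))
    (hl2 : l2 = a11 * (a12 - a22) / (a11 * a22 - a12 * a21))
    (hl1ne : l1 ≠ 0) (hl2ne : l2 ≠ 0) :
    ∀ x1 x2 : ℝ, 0 < x1 → 0 < x2 →
      (x1 * (b1 + a11 * x1 + a12 * x2) + e1) *
        deriv (fun t => t ^ l1 * x2 ^ l2 *
          (b1 / l2 + a11 / l2 * t - a22 / l1 * x2)) x1 +
      (x2 * (b2 + a21 * x1 + a22 * x2) + e2) *
        deriv (fun t => x1 ^ l1 * t ^ l2 *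
          (b1 / l2 + a11 / l2 * x1 - a22 / l1 * t)) x2 = 0 := by
  intro x1 x2 hx1 hx2
  have hx1' : x1 ≠ 0 := ne_of_gt hx1
  have hx2' : x2 ≠ 0 := ne_of_gt hx2
  -- relations among the parameters
  have hR1 : l1 * (a11 * a22 - a12 * a21) = a22 * (a21 - a11) := by
    rw [hl1]; exact div_mul_cancel₀ _ hdet
  have hR2 : l2 * (a11 * a22 - a12 * a21) = a11 * (a12 - a22) := by
    rw [hl2]; field_simp
  have hR3 : b1 * l1 + b2 * l2 = 0 := by
    have h : (b1 * l1 + b2 * l2) * (a11 * a22 - a12 * a21) = 0 := by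
      have : (b1 * l1 + b2 * l2) * (a11 * a22 - a12 * a21)
          = b1 * (l1 * (a11 * a22 - a12 * a21)) + b2 * (l2 * (a11 * a22 - a12 * a21)) := by
        ring
      rw [this, hR1, hR2]
      linarith [hsolv]
    exact (mul_eq_zero.mp h).resolve_right hdet
  -- derivative in the first variable
  have hd1 : HasDerivAt (fun t => t ^ l1 * x2 ^ l2 *
      (b1 / l2 + a11 / l2 * t - a22 / l1 * x2))
      ((l1 * x1 ^ (l1 - 1) * x2 ^ l2) *
        (b1 / l2 + a11 / l2 * x1 - a22 / l1 * x2)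
        + (x1 ^ l1 * x2 ^ l2) * (a11 / l2)) x1 := by
    have h1 : HasDerivAt (fun t : ℝ => t ^ l1 * x2 ^ l2)
        (l1 * x1 ^ (l1 - 1) * x2 ^ l2) x1 :=
      (Real.hasDerivAt_rpow_const (Or.inl hx1')).mul_const _
    have h2 : HasDerivAt (fun t : ℝ => b1 / l2 + a11 / l2 * t - a22 / l1 * x2)
        (a11 / l2) x1 := by
      simpa using (((hasDerivAt_id x1).const_mul (a11 / l2)).const_add (b1 / l2)).sub_const
        (a22 / l1 * x2)
    exact h1.mul h2
  -- derivative in the second variable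
  have hd2 : HasDerivAt (fun t => x1 ^ l1 * t ^ l2 *
      (b1 / l2 + a11 / l2 * x1 - a22 / l1 * t))
      ((x1 ^ l1 * (l2 * x2 ^ (l2 - 1))) *
        (b1 / l2 + a11 / l2 * x1 - a22 / l1 * x2)
        + (x1 ^ l1 * x2 ^ l2) * (-(a22 / l1))) x2 := by
    have h1 : HasDerivAt (fun t : ℝ => x1 ^ l1 * t ^ l2)
        (x1 ^ l1 * (l2 * x2 ^ (l2 - 1))) x2 :=
      (Real.hasDerivAt_rpow_const (Or.inl hx2')).const_mul _
    have h2 : HasDerivAt (fun t : ℝ => b1 / l2 + a11 / l2 * x1 - a22 / l1 * t)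
        (-(a22 / l1)) x2 := by
      exact ((hasDerivAt_const x2 (b1 / l2 + a11 / l2 * x1)).sub
        ((hasDerivAt_id x2).const_mul (a22 / l1))).congr_deriv (by ring)
    exact h1.mul h2
  rw [he1, he2, hd1.deriv, hd2.deriv]
  have e1' : x1 ^ (l1 - 1) = x1 ^ l1 / x1 := by
    rw [Real.rpow_sub hx1, Real.rpow_one]
  have e2' : x2 ^ (l2 - 1) = x2 ^ l2 / x2 := by
    rw [Real.rpow_sub hx2, Real.rpow_one]
  rw [e1', e2']
  set A := x1 ^ l1 with hA
  set B := x2 ^ l2 with hB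
  have hS1 : a11 * l1 + a21 * l2 = -a11 := by
    have h : (a11 * l1 + a21 * l2 + a11) * (a11 * a22 - a12 * a21) = 0 := by
      have : (a11 * l1 + a21 * l2 + a11) * (a11 * a22 - a12 * a21)
          = a11 * (l1 * (a11 * a22 - a12 * a21)) + a21 * (l2 * (a11 * a22 - a12 * a21))
            + a11 * (a11 * a22 - a12 * a21) := by ring
      rw [this, hR1, hR2]; ring
    have := (mul_eq_zero.mp h).resolve_right hdet
    linarith
  have hS2 : a12 * l1 + a22 * l2 = -a22 := by
    have h : (a12 * l1 + a22 * l2 + a22) * (a11 * a22 - a12 * a21) = 0 := by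
      have : (a12 * l1 + a22 * l2 + a22) * (a11 * a22 - a12 * a21)
          = a12 * (l1 * (a11 * a22 - a12 * a21)) + a22 * (l2 * (a11 * a22 - a12 * a21))
            + a22 * (a11 * a22 - a12 * a21) := by ring
      rw [this, hR1, hR2]; ring
    have := (mul_eq_zero.mp h).resolve_right hdet
    linarith
  -- key polynomial identity (denominator-free form)
  have key' : (b1 + a11 * x1 + a12 * x2) *
        (l1 * (b1 * l1 + a11 * l1 * x1 - a22 * l2 * x2) + a11 * l1 * x1)
      + (b2 + a21 * x1 + a22 * x2) *
        (l2 * (b1 * l1 + a11 * l1 * x1 - a22 * l2 * x2) - a22 * l2 * x2) = 0 := by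
    linear_combination ((b1 * l1 + a11 * l1 * x1 - a22 * l2 * x2) - a22 * x2) * hR3
      + ((b1 * l1 + a11 * l1 * x1 - a22 * l2 * x2) * x1 - a22 * x1 * x2) * hS1
      + ((b1 * l1 + a11 * l1 * x1 - a22 * l2 * x2) * x2 + a11 * x1 * x2) * hS2
  have key : (b1 + a11 * x1 + a12 * x2) *
        (l1 * (b1 / l2 + a11 / l2 * x1 - a22 / l1 * x2) + x1 * (a11 / l2))
      + (b2 + a21 * x1 + a22 * x2) *
        (l2 * (b1 / l2 + a11 / l2 * x1 - a22 / l1 * x2) - x2 * (a22 / l1)) = 0 := by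
    have h2 : (l1 * l2) * ((b1 + a11 * x1 + a12 * x2) *
        (l1 * (b1 / l2 + a11 / l2 * x1 - a22 / l1 * x2) + x1 * (a11 / l2))
      + (b2 + a21 * x1 + a22 * x2) *
        (l2 * (b1 / l2 + a11 / l2 * x1 - a22 / l1 * x2) - x2 * (a22 / l1)))
        = (b1 + a11 * x1 + a12 * x2) *
        (l1 * (b1 * l1 + a11 * l1 * x1 - a22 * l2 * x2) + a11 * l1 * x1)
      + (b2 + a21 * x1 + a22 * x2) *
        (l2 * (b1 * l1 + a11 * l1 * x1 - a22 * l2 * x2) - a22 * l2 * x2) := by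
      field_simp
    have h3 : (l1 * l2) * ((b1 + a11 * x1 + a12 * x2) *
        (l1 * (b1 / l2 + a11 / l2 * x1 - a22 / l1 * x2) + x1 * (a11 / l2))
      + (b2 + a21 * x1 + a22 * x2) *
        (l2 * (b1 / l2 + a11 / l2 * x1 - a22 / l1 * x2) - x2 * (a22 / l1))) = 0 := by
      rw [h2, key']
    exact (mul_eq_zero.mp h3).resolve_left (mul_ne_zero hl1ne hl2ne)
  have expand : (x1 * (b1 + a11 * x1 + a12 * x2) + 0) *
        (l1 * (A / x1) * B * (b1 / l2 + a11 / l2 * x1 - a22 / l1 * x2) + A * B * (a11 / l2))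
      + (x2 * (b2 + a21 * x1 + a22 * x2) + 0) *
        (A * (l2 * (B / x2)) * (b1 / l2 + a11 / l2 * x1 - a22 / l1 * x2) + A * B * (-(a22 / l1)))
      = (A * B) * ((b1 + a11 * x1 + a12 * x2) *
        (l1 * (b1 / l2 + a11 / l2 * x1 - a22 / l1 * x2) + x1 * (a11 / l2))
      + (b2 + a21 * x1 + a22 * x2) *
        (l2 * (b1 / l2 + a11 / l2 * x1 - a22 / l1 * x2) - x2 * (a22 / l1))) := by
    field_simp
    ring
  calc (x1 * (b1 + a11 * x1 + a12 * x2) + 0) *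
        (l1 * (A / x1) * B * (b1 / l2 + a11 / l2 * x1 - a22 / l1 * x2) + A * B * (a11 / l2))
      + (x2 * (b2 + a21 * x1 + a22 * x2) + 0) *
        (A * (l2 * (B / x2)) * (b1 / l2 + a11 / l2 * x1 - a22 / l1 * x2) + A * B * (-(a22 / l1)))
      = (A * B) * 0 := by rw [expand, key]
    _ = 0 := by ring
end

section
/- Suppose e₁ = e₂ = 0, b₂ = 0, a₂₂ = 0, a₁₂ ≠ 0 and a₂₁ ≠ 0. Set l₂ = −a₁₁/a₂₁ and suppose l₂ ≠ 0 and l₂ ≠ −1. Then the function H(x₁,x₂) = x₂^(l₂)·(b₁/l₂ + (a₁₁/l₂)x₁ + (a₁₂/(l₂+1))x₂) is a first integral of the two-dimensional Lotka–Volterra system with constant terms on the open set {(x₁,x₂) ∈ ℝ² : x₂ > 0}. -/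
/-- Case `e₁ = e₂ = 0`, `l₁ = 0`, `l₂ ≠ 0`, `l₂ ≠ −1`:
`H = x₂^{l₂}(b₁/l₂ + (a₁₁/l₂)x₁ + (a₁₂/(l₂+1))x₂)` is a first integral on `{x₂ > 0}`. -/
theorem stmt_6 (b1 b2 a11 a12 a21 a22 e1 e2 l2 : ℝ)
    (he1 : e1 = 0) (he2 : e2 = 0) (hb2 : b2 = 0) (h22 : a22 = 0)
    (h12 : a12 ≠ 0) (h21 : a21 ≠ 0)
    (hl2 : l2 = -a11 / a21) (hl2ne : l2 ≠ 0) (hl2ne' : l2 ≠ -1) :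
    ∀ x1 x2 : ℝ, 0 < x2 →
      (x1 * (b1 + a11 * x1 + a12 * x2) + e1) *
        deriv (fun t => x2 ^ l2 *
          (b1 / l2 + a11 / l2 * t + a12 / (l2 + 1) * x2)) x1 +
      (x2 * (b2 + a21 * x1 + a22 * x2) + e2) *
        deriv (fun t => t ^ l2 *
          (b1 / l2 + a11 / l2 * x1 + a12 / (l2 + 1) * t)) x2 = 0 := by
  intro x1 x2 hx2
  have ha11 : a11 = -l2 * a21 := by
    field_simp at hl2
    linarith [hl2]
  -- first derivative
  have hd1 : HasDerivAt (fun t => x2 ^ l2 *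
      (b1 / l2 + a11 / l2 * t + a12 / (l2 + 1) * x2)) (x2 ^ l2 * (a11 / l2)) x1 := by
    have h : HasDerivAt (fun t : ℝ => b1 / l2 + a11 / l2 * t + a12 / (l2 + 1) * x2)
        (a11 / l2) x1 := by
      simpa using (((hasDerivAt_id x1).const_mul (a11 / l2)).const_add (b1 / l2)).add_const
        (a12 / (l2 + 1) * x2)
    simpa using h.const_mul (x2 ^ l2)
  -- second derivative
  have hpow : HasDerivAt (fun t : ℝ => t ^ l2) (l2 * x2 ^ (l2 - 1)) x2 := by
    simpa using Real.hasDerivAt_rpow_const (x := x2) (p := l2) (Or.inl hx2.ne')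
  have hlin : HasDerivAt (fun t : ℝ => b1 / l2 + a11 / l2 * x1 + a12 / (l2 + 1) * t)
      (a12 / (l2 + 1)) x2 := by
    simpa using ((hasDerivAt_id x2).const_mul (a12 / (l2 + 1))).const_add
      (b1 / l2 + a11 / l2 * x1)
  have hd2 : HasDerivAt (fun t : ℝ => t ^ l2 * (b1 / l2 + a11 / l2 * x1 + a12 / (l2 + 1) * t))
      (l2 * x2 ^ (l2 - 1) * (b1 / l2 + a11 / l2 * x1 + a12 / (l2 + 1) * x2) + x2 ^ l2 * (a12 / (l2 + 1))) x2 :=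
    hpow.mul hlin
  rw [hd1.deriv, hd2.deriv]
  have hx2l : x2 * x2 ^ (l2 - 1) = x2 ^ l2 := by
    rw [← Real.rpow_one_add' hx2.le (by rw [add_sub_cancel]; exact hl2ne)]
    norm_num
  have hl1 : l2 + 1 ≠ 0 := by
    intro h; apply hl2ne'; linarith
  subst he1 he2 hb2 h22 ha11
  have key : x2 * (l2 * x2 ^ (l2 - 1)) = l2 * x2 ^ l2 := by
    rw [← hx2l]; ring
  rw [show x2 ^ (l2 - 1) = x2 ^ l2 / x2 from by rw [← hx2l]; field_simp]
  field_simp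
  ring
end

section
/- Suppose e₁ = e₂ = 0, b₂ = 0 and a₂₁ = a₁₁. Then the function H(x₁,x₂) = a₁₂·ln x₂ − a₂₂·ln x₁ − b₁/x₂ − a₁₁·x₁/x₂ is a first integral of the two-dimensional Lotka–Volterra system with constant terms on the open positive quadrant {(x₁,x₂) : x₁ > 0, x₂ > 0}. -/
/-- Case `e₁ = e₂ = 0`, `l₁ = 0`, `l₂ = −1` (so `b₂ = 0`, `a₂₁ = a₁₁`):
`H = a₁₂ ln x₂ − a₂₂ ln x₁ − b₁/x₂ − a₁₁ x₁/x₂` is a first integral on the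
positive quadrant. -/
theorem stmt_7 (b1 b2 a11 a12 a21 a22 e1 e2 : ℝ)
    (he1 : e1 = 0) (he2 : e2 = 0) (hb2 : b2 = 0) (h21 : a21 = a11) :
    ∀ x1 x2 : ℝ, 0 < x1 → 0 < x2 →
      (x1 * (b1 + a11 * x1 + a12 * x2) + e1) *
        deriv (fun t => a12 * Real.log x2 - a22 * Real.log t
          - b1 / x2 - a11 * t / x2) x1 +
      (x2 * (b2 + a21 * x1 + a22 * x2) + e2) *
        deriv (fun t => a12 * Real.log t - a22 * Real.log x1
          - b1 / t - a11 * x1 / t) x2 = 0 := by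
  intro x1 x2 h1 h2
  have h1' : x1 ≠ 0 := ne_of_gt h1
  have h2' : x2 ≠ 0 := ne_of_gt h2
  have d1 : HasDerivAt (fun t => a12 * Real.log x2 - a22 * Real.log t
      - b1 / x2 - a11 * t / x2) (-(a22 * x1⁻¹) - a11 / x2) x1 := by
    have := ((Real.hasDerivAt_log h1').const_mul a22).const_sub (a12 * Real.log x2)
    have := (this.sub_const (b1 / x2)).sub
      (((hasDerivAt_id x1).const_mul a11).div_const x2)
    simpa [mul_comm, Pi.sub_def] using this
  have d2 : HasDerivAt (fun t => a12 * Real.log t - a22 * Real.log x1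
      - b1 / t - a11 * x1 / t) (a12 * x2⁻¹ - (-(b1 / x2 ^ 2)) - (-(a11 * x1 / x2 ^ 2))) x2 := by
    have hlog := (Real.hasDerivAt_log h2').const_mul a12
    have hinv : HasDerivAt (fun t : ℝ => b1 / t) (-(b1 / x2 ^ 2)) x2 := by
      simpa [div_eq_mul_inv, mul_comm] using (hasDerivAt_inv h2').const_mul b1
    have hinv2 : HasDerivAt (fun t : ℝ => a11 * x1 / t) (-(a11 * x1 / x2 ^ 2)) x2 := by
      simpa [div_eq_mul_inv, mul_comm] using (hasDerivAt_inv h2').const_mul (a11 * x1)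
    exact ((hlog.sub_const (a22 * Real.log x1)).sub hinv).sub hinv2
  rw [d1.deriv, d2.deriv, he1, he2, hb2, h21]
  field_simp
  ring
end

section
/- Suppose e₁ = e₂ = 0, a₂₁ ≠ 0, and there is λ ∈ ℝ, λ ≠ 0, with (a₁₁, a₁₂, b₁) = λ·(a₂₁, a₂₂, b₂), so that λ = a₁₁/a₂₁. Then the function H(x₁,x₂) = x₁·x₂^(−λ) is a first integral of the two-dimensional Lotka–Volterra system with constant terms on the open positive quadrant {(x₁,x₂) : x₁ > 0, x₂ > 0}. -/
/-- Case `e₁ = e₂ = 0` with rank-one matrix `(a₁₁,a₁₂,b₁) = λ(a₂₁,a₂₂,b₂)`: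
`H = x₁ x₂^{−λ}` is a first integral on the positive quadrant. -/
theorem stmt_9 (b1 b2 a11 a12 a21 a22 e1 e2 lam : ℝ)
    (he1 : e1 = 0) (he2 : e2 = 0) (h21 : a21 ≠ 0) (hlam : lam ≠ 0)
    (h1 : a11 = lam * a21) (h2 : a12 = lam * a22) (h3 : b1 = lam * b2) :
    ∀ x1 x2 : ℝ, 0 < x1 → 0 < x2 →
      (x1 * (b1 + a11 * x1 + a12 * x2) + e1) *
        deriv (fun t => t * x2 ^ (-lam)) x1 +
      (x2 * (b2 + a21 * x1 + a22 * x2) + e2) *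
        deriv (fun t => x1 * t ^ (-lam)) x2 = 0 := by
  intro x1 x2 hx1 hx2
  have hd1 : deriv (fun t : ℝ => t * x2 ^ (-lam)) x1 = x2 ^ (-lam) := by
    simp [deriv_mul_const]
  have hd2 : deriv (fun t : ℝ => x1 * t ^ (-lam)) x2
      = x1 * ((-lam) * x2 ^ (-lam - 1)) := by
    rw [deriv_const_mul _ (Real.differentiableAt_rpow_const_of_ne (-lam) hx2.ne')]
    rw [Real.deriv_rpow_const x2 (-lam)]
  have hpow : x2 ^ (-lam) = x2 ^ (-lam - 1) * x2 := by
    rw [← Real.rpow_add_one hx2.ne' (-lam - 1)]; ring_nf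
  rw [hd1, hd2, he1, he2, h1, h2, h3, hpow]
  ring
end

section
/- Suppose a₁₁ = a₂₂ = 0, a₁₂·a₂₁ ≠ 0, b₁ + b₂ = 0 and e₂a₁₂ − e₁a₂₁ = 0. Then the function H(x₁,x₂) = a₂₁x₁ − a₁₂x₂ + b₂·ln(e₁ + a₁₂x₁x₂) is a first integral of the two-dimensional Lotka–Volterra system with constant terms on the open set {(x₁,x₂) ∈ ℝ² : e₁ + a₁₂x₁x₂ > 0}. -/
/-- Case `α ≠ 0`: under `a₁₁ = a₂₂ = 0`, `a₁₂a₂₁ ≠ 0`, `b₁ + b₂ = 0`,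
`e₂a₁₂ − e₁a₂₁ = 0`, the function
`H = a₂₁x₁ − a₁₂x₂ + b₂ ln(e₁ + a₁₂x₁x₂)` is a first integral on
`{e₁ + a₁₂x₁x₂ > 0}`. -/
theorem stmt_10 (b1 b2 a11 a12 a21 a22 e1 e2 : ℝ)
    (h11 : a11 = 0) (h22 : a22 = 0) (hprod : a12 * a21 ≠ 0)
    (hb : b1 + b2 = 0) (he : e2 * a12 - e1 * a21 = 0) :
    ∀ x1 x2 : ℝ, 0 < e1 + a12 * x1 * x2 →
      (x1 * (b1 + a11 * x1 + a12 * x2) + e1) *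
        deriv (fun t => a21 * t - a12 * x2
          + b2 * Real.log (e1 + a12 * t * x2)) x1 +
      (x2 * (b2 + a21 * x1 + a22 * x2) + e2) *
        deriv (fun t => a21 * x1 - a12 * t
          + b2 * Real.log (e1 + a12 * x1 * t)) x2 = 0 := by
  intro x1 x2 hpos
  have hD : e1 + a12 * x1 * x2 ≠ 0 := ne_of_gt hpos
  have h1 : HasDerivAt (fun t => a21 * t - a12 * x2
      + b2 * Real.log (e1 + a12 * t * x2)) (a21 + b2 * ((a12 * x2) / (e1 + a12 * x1 * x2))) x1 := by
    have hin : HasDerivAt (fun t : ℝ => e1 + a12 * t * x2) (a12 * x2) x1 := by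
      simpa using ((hasDerivAt_id x1).const_mul a12 |>.mul_const x2).const_add e1
    have hlog := (hin.log hD).const_mul b2
    have hlin : HasDerivAt (fun t : ℝ => a21 * t - a12 * x2) a21 x1 := by
      simpa using ((hasDerivAt_id x1).const_mul a21).sub_const (a12 * x2)
    simpa [mul_comm, mul_assoc, mul_left_comm, div_eq_mul_inv] using hlin.fun_add hlog
  have h2 : HasDerivAt (fun t => a21 * x1 - a12 * t
      + b2 * Real.log (e1 + a12 * x1 * t)) (-a12 + b2 * ((a12 * x1) / (e1 + a12 * x1 * x2))) x2 := by
    have hin : HasDerivAt (fun t : ℝ => e1 + a12 * x1 * t) (a12 * x1) x2 := by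
      simpa using ((hasDerivAt_id x2).const_mul (a12 * x1)).const_add e1
    have hlog := (hin.log hD).const_mul b2
    have hlin : HasDerivAt (fun t : ℝ => a21 * x1 - a12 * t) (-a12) x2 := by
      simpa using (((hasDerivAt_id x2).const_mul a12).const_sub (a21 * x1)).neg.neg.const_add 0 |>.congr_deriv (by ring)
    simpa [mul_comm, mul_assoc, mul_left_comm, div_eq_mul_inv] using hlin.fun_add hlog
  rw [h1.deriv, h2.deriv]
  have ha12 : a12 ≠ 0 := fun h => hprod (by simp [h])
  have hb1 : b1 = -b2 := by linarith
  have he2 : e2 = e1 * a21 / a12 := by field_simp; linarith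
  subst h11 h22 hb1 he2
  field_simp
  linear_combination b2 * (a12 * x2 + x1 * a21) * (mul_inv_cancel₀ hD)
end

section
/- Suppose the real parameters satisfy b₁ + b₂ = 0, 2a₁₁ + a₂₁ = 0, 2a₂₂ + a₁₂ = 0 and a₁₃ = a₂₃ = 0 (with e₁, e₂, e₃ arbitrary). Then the function H(x₁,x₂,x₃) = b₁x₁x₂ + a₁₁x₁²x₂ − a₂₂x₁x₂² + e₁x₂ − e₂x₁ is a first integral of the three-dimensional Lotka–Volterra system with constant terms on all of ℝ³. -/
/-- Lemma 2, case 1: with `b₁+b₂ = 0`, `2a₁₁+a₂₁ = 0`, `2a₂₂+a₁₂ = 0`,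
`a₁₃ = a₂₃ = 0`, the function `H = b₁x₁x₂ + a₁₁x₁²x₂ − a₂₂x₁x₂² + e₁x₂ − e₂x₁`
is a first integral of the 3D LV system on `ℝ³`. -/
theorem stmt_11 (b1 b2 b3 a11 a12 a13 a21 a22 a23 a31 a32 a33 e1 e2 e3 : ℝ)
    (h1 : b1 + b2 = 0) (h2 : 2 * a11 + a21 = 0) (h3 : 2 * a22 + a12 = 0)
    (h4 : a13 = 0) (h5 : a23 = 0) :
    ∀ x1 x2 x3 : ℝ,
      (x1 * (b1 + a11 * x1 + a12 * x2 + a13 * x3) + e1) *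
        deriv (fun t => b1 * t * x2 + a11 * t ^ 2 * x2 - a22 * t * x2 ^ 2
          + e1 * x2 - e2 * t) x1 +
      (x2 * (b2 + a21 * x1 + a22 * x2 + a23 * x3) + e2) *
        deriv (fun t => b1 * x1 * t + a11 * x1 ^ 2 * t - a22 * x1 * t ^ 2
          + e1 * t - e2 * x1) x2 +
      (x3 * (b3 + a31 * x1 + a32 * x2 + a33 * x3) + e3) *
        deriv (fun t => b1 * x1 * x2 + a11 * x1 ^ 2 * x2 - a22 * x1 * x2 ^ 2
          + e1 * x2 - e2 * x1) x3 = 0 := by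
  intro x1 x2 x3
  have D1 : HasDerivAt (fun t => b1 * t * x2 + a11 * t ^ 2 * x2 - a22 * t * x2 ^ 2
      + e1 * x2 - e2 * t) (b1 * x2 + a11 * (2 * x1) * x2 - a22 * x2 ^ 2 - e2) x1 := by
    have hA : HasDerivAt (fun t : ℝ => b1 * t * x2) (b1 * x2) x1 := by
      simpa using (((hasDerivAt_id x1).const_mul b1).mul_const x2)
    have hB : HasDerivAt (fun t : ℝ => a11 * t ^ 2 * x2) (a11 * (2 * x1) * x2) x1 := by
      simpa [mul_comm, mul_assoc, mul_left_comm] using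
        (((hasDerivAt_pow 2 x1).const_mul a11).mul_const x2)
    have hC : HasDerivAt (fun t : ℝ => a22 * t * x2 ^ 2) (a22 * x2 ^ 2) x1 := by
      simpa using (((hasDerivAt_id x1).const_mul a22).mul_const (x2 ^ 2))
    have hD : HasDerivAt (fun t : ℝ => e2 * t) e2 x1 := by
      simpa using (hasDerivAt_id x1).const_mul e2
    exact (((hA.add hB).sub hC).add_const (e1 * x2)).sub hD
  have D2 : HasDerivAt (fun t => b1 * x1 * t + a11 * x1 ^ 2 * t - a22 * x1 * t ^ 2
      + e1 * t - e2 * x1) (b1 * x1 + a11 * x1 ^ 2 - a22 * x1 * (2 * x2) + e1) x2 := by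
    have hA : HasDerivAt (fun t : ℝ => b1 * x1 * t) (b1 * x1) x2 := by
      simpa using (hasDerivAt_id x2).const_mul (b1 * x1)
    have hB : HasDerivAt (fun t : ℝ => a11 * x1 ^ 2 * t) (a11 * x1 ^ 2) x2 := by
      simpa using (hasDerivAt_id x2).const_mul (a11 * x1 ^ 2)
    have hC : HasDerivAt (fun t : ℝ => a22 * x1 * t ^ 2) (a22 * x1 * (2 * x2)) x2 := by
      simpa [mul_comm, mul_assoc, mul_left_comm] using
        (hasDerivAt_pow 2 x2).const_mul (a22 * x1)
    have hD : HasDerivAt (fun t : ℝ => e1 * t) e1 x2 := by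
      simpa using (hasDerivAt_id x2).const_mul e1
    simpa using (((hA.add hB).sub hC).add hD).sub_const (e2 * x1)
  rw [D1.deriv, D2.deriv, deriv_const]
  have hb : b2 = -b1 := by linarith
  have ha : a21 = -(2 * a11) := by linarith
  have ha2 : a12 = -(2 * a22) := by linarith
  subst hb ha ha2 h4 h5
  ring
end

section
/- Suppose the real parameters satisfy b₁ = b₂ = b₃ = 0 and aᵢⱼ = −2aⱼⱼ for all i ≠ j with i,j ∈ {1,2,3} (with e₁, e₂, e₃ arbitrary). Then the function H(x₁,x₂,x₃) = a₁₁²a₂₂x₁²x₂ − a₁₁²a₃₃x₁²x₃ − a₁₁a₂₂²x₁x₂² + a₁₁a₃₃²x₁x₃² + a₂₂²a₃₃x₂²x₃ − a₂₂a₃₃²x₂x₃² + (−a₁₁a₂₂e₂ + a₁₁a₃₃e₃)x₁ + (a₁₁a₂₂e₁ − a₂₂a₃₃e₃)x₂ + (a₂₂a₃₃e₂ − a₁₁a₃₃e₁)x₃ is a first integral of the three-dimensional Lotka–Volterra system with constant terms on all of ℝ³. -/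
lemma deriv_quad (a b c : ℝ) (x : ℝ) :
    deriv (fun t : ℝ => a * t ^ 2 + b * t + c) x = 2 * a * x + b := by
  have h : HasDerivAt (fun t : ℝ => a * t ^ 2 + b * t + c)
      (a * (2 * x ^ 1) + b * 1) x := by
    exact (((hasDerivAt_pow 2 x).const_mul a).add ((hasDerivAt_id x).const_mul b)).add_const c
  have := h.deriv
  simpa [pow_one] using this.trans (by ring)

/-- Lemma 2, case 3: with `bᵢ = 0` and `aᵢⱼ = −2aⱼⱼ` for `i ≠ j`, the cubic
polynomial `H` given in (26) of the paper is a first integral of the 3D LV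
system on `ℝ³`. -/
theorem stmt_13 (b1 b2 b3 a11 a12 a13 a21 a22 a23 a31 a32 a33 e1 e2 e3 : ℝ)
    (hb1 : b1 = 0) (hb2 : b2 = 0) (hb3 : b3 = 0)
    (h12 : a12 = -2 * a22) (h13 : a13 = -2 * a33)
    (h21 : a21 = -2 * a11) (h23 : a23 = -2 * a33)
    (h31 : a31 = -2 * a11) (h32 : a32 = -2 * a22) :
    ∀ x1 x2 x3 : ℝ,
      (x1 * (b1 + a11 * x1 + a12 * x2 + a13 * x3) + e1) *
        deriv (fun t => a11 ^ 2 * a22 * t ^ 2 * x2 - a11 ^ 2 * a33 * t ^ 2 * x3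
          - a11 * a22 ^ 2 * t * x2 ^ 2 + a11 * a33 ^ 2 * t * x3 ^ 2
          + a22 ^ 2 * a33 * x2 ^ 2 * x3 - a22 * a33 ^ 2 * x2 * x3 ^ 2
          + (-a11 * a22 * e2 + a11 * a33 * e3) * t
          + (a11 * a22 * e1 - a22 * a33 * e3) * x2
          + (a22 * a33 * e2 - a11 * a33 * e1) * x3) x1 +
      (x2 * (b2 + a21 * x1 + a22 * x2 + a23 * x3) + e2) *
        deriv (fun t => a11 ^ 2 * a22 * x1 ^ 2 * t - a11 ^ 2 * a33 * x1 ^ 2 * x3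
          - a11 * a22 ^ 2 * x1 * t ^ 2 + a11 * a33 ^ 2 * x1 * x3 ^ 2
          + a22 ^ 2 * a33 * t ^ 2 * x3 - a22 * a33 ^ 2 * t * x3 ^ 2
          + (-a11 * a22 * e2 + a11 * a33 * e3) * x1
          + (a11 * a22 * e1 - a22 * a33 * e3) * t
          + (a22 * a33 * e2 - a11 * a33 * e1) * x3) x2 +
      (x3 * (b3 + a31 * x1 + a32 * x2 + a33 * x3) + e3) *
        deriv (fun t => a11 ^ 2 * a22 * x1 ^ 2 * x2 - a11 ^ 2 * a33 * x1 ^ 2 * t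
          - a11 * a22 ^ 2 * x1 * x2 ^ 2 + a11 * a33 ^ 2 * x1 * t ^ 2
          + a22 ^ 2 * a33 * x2 ^ 2 * t - a22 * a33 ^ 2 * x2 * t ^ 2
          + (-a11 * a22 * e2 + a11 * a33 * e3) * x1
          + (a11 * a22 * e1 - a22 * a33 * e3) * x2
          + (a22 * a33 * e2 - a11 * a33 * e1) * t) x3 = 0 := by
  intro x1 x2 x3
  have H1 : (fun t : ℝ => a11 ^ 2 * a22 * t ^ 2 * x2 - a11 ^ 2 * a33 * t ^ 2 * x3
          - a11 * a22 ^ 2 * t * x2 ^ 2 + a11 * a33 ^ 2 * t * x3 ^ 2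
          + a22 ^ 2 * a33 * x2 ^ 2 * x3 - a22 * a33 ^ 2 * x2 * x3 ^ 2
          + (-a11 * a22 * e2 + a11 * a33 * e3) * t
          + (a11 * a22 * e1 - a22 * a33 * e3) * x2
          + (a22 * a33 * e2 - a11 * a33 * e1) * x3)
      = (fun t : ℝ => (a11 ^ 2 * a22 * x2 - a11 ^ 2 * a33 * x3) * t ^ 2
          + (-(a11 * a22 ^ 2 * x2 ^ 2) + a11 * a33 ^ 2 * x3 ^ 2
             + (-a11 * a22 * e2 + a11 * a33 * e3)) * t
          + (a22 ^ 2 * a33 * x2 ^ 2 * x3 - a22 * a33 ^ 2 * x2 * x3 ^ 2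
             + (a11 * a22 * e1 - a22 * a33 * e3) * x2
             + (a22 * a33 * e2 - a11 * a33 * e1) * x3)) := by
    funext t; ring
  have H2 : (fun t : ℝ => a11 ^ 2 * a22 * x1 ^ 2 * t - a11 ^ 2 * a33 * x1 ^ 2 * x3
          - a11 * a22 ^ 2 * x1 * t ^ 2 + a11 * a33 ^ 2 * x1 * x3 ^ 2
          + a22 ^ 2 * a33 * t ^ 2 * x3 - a22 * a33 ^ 2 * t * x3 ^ 2
          + (-a11 * a22 * e2 + a11 * a33 * e3) * x1
          + (a11 * a22 * e1 - a22 * a33 * e3) * t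
          + (a22 * a33 * e2 - a11 * a33 * e1) * x3)
      = (fun t : ℝ => (-(a11 * a22 ^ 2 * x1) + a22 ^ 2 * a33 * x3) * t ^ 2
          + (a11 ^ 2 * a22 * x1 ^ 2 - a22 * a33 ^ 2 * x3 ^ 2
             + (a11 * a22 * e1 - a22 * a33 * e3)) * t
          + (-(a11 ^ 2 * a33 * x1 ^ 2 * x3) + a11 * a33 ^ 2 * x1 * x3 ^ 2
             + (-a11 * a22 * e2 + a11 * a33 * e3) * x1
             + (a22 * a33 * e2 - a11 * a33 * e1) * x3)) := by
    funext t; ring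
  have H3 : (fun t : ℝ => a11 ^ 2 * a22 * x1 ^ 2 * x2 - a11 ^ 2 * a33 * x1 ^ 2 * t
          - a11 * a22 ^ 2 * x1 * x2 ^ 2 + a11 * a33 ^ 2 * x1 * t ^ 2
          + a22 ^ 2 * a33 * x2 ^ 2 * t - a22 * a33 ^ 2 * x2 * t ^ 2
          + (-a11 * a22 * e2 + a11 * a33 * e3) * x1
          + (a11 * a22 * e1 - a22 * a33 * e3) * x2
          + (a22 * a33 * e2 - a11 * a33 * e1) * t)
      = (fun t : ℝ => (a11 * a33 ^ 2 * x1 - a22 * a33 ^ 2 * x2) * t ^ 2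
          + (-(a11 ^ 2 * a33 * x1 ^ 2) + a22 ^ 2 * a33 * x2 ^ 2
             + (a22 * a33 * e2 - a11 * a33 * e1)) * t
          + (a11 ^ 2 * a22 * x1 ^ 2 * x2 - a11 * a22 ^ 2 * x1 * x2 ^ 2
             + (-a11 * a22 * e2 + a11 * a33 * e3) * x1
             + (a11 * a22 * e1 - a22 * a33 * e3) * x2)) := by
    funext t; ring
  rw [H1, H2, H3, deriv_quad, deriv_quad, deriv_quad]
  subst hb1 hb2 hb3 h12 h13 h21 h23 h31 h32
  ring
end

section
/- Suppose e₂ = e₃ = 0, b₂ = 0, a₂₁ = 0, a₂₂ = 0, a₂₃ ≠ 0, b₁ + b₃ = 0, and a₁ᵢ + a₃ᵢ = 0 for i = 1, 2, 3. Then the function H(x₁,x₂,x₃) = −a₂₃x₁x₃ + e₁·ln x₂ is a first integral of the three-dimensional Lotka–Volterra system with constant terms on the open set {(x₁,x₂,x₃) ∈ ℝ³ : x₂ > 0}. -/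
/-- Lemma 4, case 2: with `e₂ = e₃ = 0` and the stated conditions,
`H = −a₂₃x₁x₃ + e₁ ln x₂` is a first integral of the 3D LV system on `{x₂ > 0}`. -/
theorem stmt_16 (b1 b2 b3 a11 a12 a13 a21 a22 a23 a31 a32 a33 e1 e2 e3 : ℝ)
    (he2 : e2 = 0) (he3 : e3 = 0)
    (hb2 : b2 = 0) (h21 : a21 = 0) (h22 : a22 = 0) (h23 : a23 ≠ 0)
    (hb : b1 + b3 = 0)
    (h1 : a11 + a31 = 0) (h2 : a12 + a32 = 0) (h3 : a13 + a33 = 0) :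
    ∀ x1 x2 x3 : ℝ, 0 < x2 →
      (x1 * (b1 + a11 * x1 + a12 * x2 + a13 * x3) + e1) *
        deriv (fun t => -a23 * t * x3 + e1 * Real.log x2) x1 +
      (x2 * (b2 + a21 * x1 + a22 * x2 + a23 * x3) + e2) *
        deriv (fun t => -a23 * x1 * x3 + e1 * Real.log t) x2 +
      (x3 * (b3 + a31 * x1 + a32 * x2 + a33 * x3) + e3) *
        deriv (fun t => -a23 * x1 * t + e1 * Real.log x2) x3 = 0 := by
  intro x1 x2 x3 hx2
  have d1 : deriv (fun t => -a23 * t * x3 + e1 * Real.log x2) x1 = -a23 * x3 := by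
    have : (fun t => -a23 * t * x3 + e1 * Real.log x2)
        = fun t => (-a23 * x3) * t + e1 * Real.log x2 := by ext t; ring
    rw [this]
    simp [deriv_add, mul_comm]
  have d2 : deriv (fun t => -a23 * x1 * x3 + e1 * Real.log t) x2 = e1 / x2 := by
    rw [deriv_const_add]
    rw [deriv_const_mul _ (Real.differentiableAt_log hx2.ne')]
    rw [Real.deriv_log]
    ring
  have d3 : deriv (fun t => -a23 * x1 * t + e1 * Real.log x2) x3 = -a23 * x1 := by
    simp [deriv_add, mul_comm]
  rw [d1, d2, d3]
  have h31 : a31 = -a11 := by linarith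
  have h32 : a32 = -a12 := by linarith
  have h33 : a33 = -a13 := by linarith
  have hb3 : b3 = -b1 := by linarith
  subst he2 he3 hb2 h21 h22 h31 h32 h33 hb3
  field_simp
  ring
end

section
/- Suppose e₂ = e₃ = 0, a₁₂ = a₁₃ = 0, and suppose l₂, l₃ ∈ ℝ satisfy the linear equations b₂l₂ + b₃l₃ = −b₁, a₂₁l₂ + a₃₁l₃ = −2a₁₁, a₂₂l₂ + a₃₂l₃ = 0 and a₂₃l₂ + a₃₃l₃ = 0. Then the function H(x₁,x₂,x₃) = (b₁ + a₁₁x₁)·x₁·x₂^(l₂)·x₃^(l₃) + e₁·x₂^(l₂)·x₃^(l₃) is a first integral of the three-dimensional Lotka–Volterra system with constant terms on the open set {(x₁,x₂,x₃) ∈ ℝ³ : x₂ > 0, x₃ > 0}. -/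
/-- Lemma 4, case 7: with `e₂ = e₃ = 0`, `a₁₂ = a₁₃ = 0` and `l₂, l₃` solving the
stated linear system, `H = (b₁ + a₁₁x₁)x₁x₂^{l₂}x₃^{l₃} + e₁x₂^{l₂}x₃^{l₃}` is a
first integral of the 3D LV system on `{x₂ > 0, x₃ > 0}`. -/
theorem stmt_17 (b1 b2 b3 a11 a12 a13 a21 a22 a23 a31 a32 a33 e1 e2 e3 l2 l3 : ℝ)
    (he2 : e2 = 0) (he3 : e3 = 0) (h12 : a12 = 0) (h13 : a13 = 0)
    (hl1 : b2 * l2 + b3 * l3 = -b1)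
    (hl2 : a21 * l2 + a31 * l3 = -2 * a11)
    (hl3 : a22 * l2 + a32 * l3 = 0)
    (hl4 : a23 * l2 + a33 * l3 = 0) :
    ∀ x1 x2 x3 : ℝ, 0 < x2 → 0 < x3 →
      (x1 * (b1 + a11 * x1 + a12 * x2 + a13 * x3) + e1) *
        deriv (fun t => (b1 + a11 * t) * t * x2 ^ l2 * x3 ^ l3
          + e1 * x2 ^ l2 * x3 ^ l3) x1 +
      (x2 * (b2 + a21 * x1 + a22 * x2 + a23 * x3) + e2) *
        deriv (fun t => (b1 + a11 * x1) * x1 * t ^ l2 * x3 ^ l3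
          + e1 * t ^ l2 * x3 ^ l3) x2 +
      (x3 * (b3 + a31 * x1 + a32 * x2 + a33 * x3) + e3) *
        deriv (fun t => (b1 + a11 * x1) * x1 * x2 ^ l2 * t ^ l3
          + e1 * x2 ^ l2 * t ^ l3) x3 = 0 := by
  intro x1 x2 x3 hx2 hx3
  have hd1 : HasDerivAt (fun t => (b1 + a11 * t) * t * x2 ^ l2 * x3 ^ l3
      + e1 * x2 ^ l2 * x3 ^ l3)
      (((0 + a11 * 1) * id x1 + (b1 + a11 * id x1) * 1) * x2 ^ l2 * x3 ^ l3 + 0) x1 := by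
    exact ((((hasDerivAt_const x1 b1).add
      ((hasDerivAt_id x1).const_mul a11)).mul (hasDerivAt_id x1)).mul_const
      (x2 ^ l2)).mul_const (x3 ^ l3) |>.add (hasDerivAt_const x1 (e1 * x2 ^ l2 * x3 ^ l3))
  have hd2 : HasDerivAt (fun t => (b1 + a11 * x1) * x1 * t ^ l2 * x3 ^ l3
      + e1 * t ^ l2 * x3 ^ l3)
      ((b1 + a11 * x1) * x1 * (l2 * x2 ^ (l2 - 1)) * x3 ^ l3
        + e1 * (l2 * x2 ^ (l2 - 1)) * x3 ^ l3) x2 := by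
    have h := Real.hasDerivAt_rpow_const (x := x2) (p := l2) (Or.inl hx2.ne')
    exact ((h.const_mul ((b1 + a11 * x1) * x1)).mul_const (x3 ^ l3)).add
      ((h.const_mul e1).mul_const (x3 ^ l3))
  have hd3 : HasDerivAt (fun t => (b1 + a11 * x1) * x1 * x2 ^ l2 * t ^ l3
      + e1 * x2 ^ l2 * t ^ l3)
      ((b1 + a11 * x1) * x1 * x2 ^ l2 * (l3 * x3 ^ (l3 - 1))
        + e1 * x2 ^ l2 * (l3 * x3 ^ (l3 - 1))) x3 := by
    have h := Real.hasDerivAt_rpow_const (x := x3) (p := l3) (Or.inl hx3.ne')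
    exact (h.const_mul ((b1 + a11 * x1) * x1 * x2 ^ l2)).add
      (h.const_mul (e1 * x2 ^ l2))
  rw [hd1.deriv, hd2.deriv, hd3.deriv]
  have h2 : x2 * x2 ^ (l2 - 1) = x2 ^ l2 := by
    rw [Real.rpow_sub_one hx2.ne']; field_simp
  have h3 : x3 * x3 ^ (l3 - 1) = x3 ^ l3 := by
    rw [Real.rpow_sub_one hx3.ne']; field_simp
  subst he2 he3 h12 h13
  set P := x2 ^ l2
  set Q := x3 ^ l3
  set R := x2 ^ (l2 - 1)
  set S := x3 ^ (l3 - 1)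
  simp only [id_eq]
  linear_combination (x1 * (b1 + a11 * x1) + e1) * P * Q * x1 * hl2
    + (x1 * (b1 + a11 * x1) + e1) * P * Q * hl1
    + (x1 * (b1 + a11 * x1) + e1) * P * Q * x2 * hl3
    + (x1 * (b1 + a11 * x1) + e1) * P * Q * x3 * hl4
    + (x1 * (b1 + a11 * x1) + e1) * (b2 + a21 * x1 + a22 * x2 + a23 * x3) * l2 * Q * h2
    + (x1 * (b1 + a11 * x1) + e1) * (b3 + a31 * x1 + a32 * x2 + a33 * x3) * l3 * P * h3
end

section
/- Suppose e₁ = e₂ = e₃ = 0, b₁ ≠ 0, a₁₁ = a₁₂ = a₁₃ = 0, and suppose α, β ∈ ℝ satisfy a₂₂α + a₃₂β = 0 and a₂₃α + a₃₃β = 0. Then the function H(x₁,x₂,x₃) = α(b₁·ln x₂ − b₂·ln x₁ − a₂₁x₁) + β(b₁·ln x₃ − b₃·ln x₁ − a₃₁x₁) is a first integral of the three-dimensional Lotka–Volterra system with constant terms on the open positive octant {(x₁,x₂,x₃) : x₁ > 0, x₂ > 0, x₃ > 0}. -/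
/-- Lemma 5, case 1: with `e₁ = e₂ = e₃ = 0`, `b₁ ≠ 0`, `a₁₁ = a₁₂ = a₁₃ = 0`
and `α, β` solving `a₂₂α + a₃₂β = 0`, `a₂₃α + a₃₃β = 0`, the function
`H = α(b₁ ln x₂ − b₂ ln x₁ − a₂₁x₁) + β(b₁ ln x₃ − b₃ ln x₁ − a₃₁x₁)` is a first
integral of the 3D LV system on the positive octant. -/
theorem stmt_18 (b1 b2 b3 a11 a12 a13 a21 a22 a23 a31 a32 a33 e1 e2 e3 α β : ℝ)
    (he1 : e1 = 0) (he2 : e2 = 0) (he3 : e3 = 0)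
    (hb1 : b1 ≠ 0) (h11 : a11 = 0) (h12 : a12 = 0) (h13 : a13 = 0)
    (hαβ1 : a22 * α + a32 * β = 0) (hαβ2 : a23 * α + a33 * β = 0) :
    ∀ x1 x2 x3 : ℝ, 0 < x1 → 0 < x2 → 0 < x3 →
      (x1 * (b1 + a11 * x1 + a12 * x2 + a13 * x3) + e1) *
        deriv (fun t => α * (b1 * Real.log x2 - b2 * Real.log t - a21 * t)
          + β * (b1 * Real.log x3 - b3 * Real.log t - a31 * t)) x1 +
      (x2 * (b2 + a21 * x1 + a22 * x2 + a23 * x3) + e2) *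
        deriv (fun t => α * (b1 * Real.log t - b2 * Real.log x1 - a21 * x1)
          + β * (b1 * Real.log x3 - b3 * Real.log x1 - a31 * x1)) x2 +
      (x3 * (b3 + a31 * x1 + a32 * x2 + a33 * x3) + e3) *
        deriv (fun t => α * (b1 * Real.log x2 - b2 * Real.log x1 - a21 * x1)
          + β * (b1 * Real.log t - b3 * Real.log x1 - a31 * x1)) x3 = 0 := by
  intro x1 x2 x3 hx1 hx2 hx3
  have d1 : deriv (fun t => α * (b1 * Real.log x2 - b2 * Real.log t - a21 * t)
      + β * (b1 * Real.log x3 - b3 * Real.log t - a31 * t)) x1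
      = α * (0 - b2 * x1⁻¹ - a21) + β * (0 - b3 * x1⁻¹ - a31) := by
    apply HasDerivAt.deriv
    simpa [Pi.add_def] using ((((hasDerivAt_const x1 (b1 * Real.log x2)).sub
      ((Real.hasDerivAt_log hx1.ne').const_mul b2)).sub
      ((hasDerivAt_id x1).const_mul a21)).const_mul α).add
      ((((hasDerivAt_const x1 (b1 * Real.log x3)).sub
      ((Real.hasDerivAt_log hx1.ne').const_mul b3)).sub
      ((hasDerivAt_id x1).const_mul a31)).const_mul β)
  have d2 : deriv (fun t => α * (b1 * Real.log t - b2 * Real.log x1 - a21 * x1)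
      + β * (b1 * Real.log x3 - b3 * Real.log x1 - a31 * x1)) x2
      = α * (b1 * x2⁻¹ - 0 - 0) + β * 0 := by
    apply HasDerivAt.deriv
    exact (((((Real.hasDerivAt_log hx2.ne').const_mul b1).sub
      (hasDerivAt_const x2 (b2 * Real.log x1))).sub
      (hasDerivAt_const x2 (a21 * x1))).const_mul α).add
      ((hasDerivAt_const x2 (b1 * Real.log x3 - b3 * Real.log x1 - a31 * x1)).const_mul β)
  have d3 : deriv (fun t => α * (b1 * Real.log x2 - b2 * Real.log x1 - a21 * x1)
      + β * (b1 * Real.log t - b3 * Real.log x1 - a31 * x1)) x3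
      = α * 0 + β * (b1 * x3⁻¹ - 0 - 0) := by
    apply HasDerivAt.deriv
    exact ((hasDerivAt_const x3 (b1 * Real.log x2 - b2 * Real.log x1 - a21 * x1)).const_mul α).add
      (((((Real.hasDerivAt_log hx3.ne').const_mul b1).sub
      (hasDerivAt_const x3 (b3 * Real.log x1))).sub
      (hasDerivAt_const x3 (a31 * x1))).const_mul β)
  rw [d1, d2, d3]
  subst he1 he2 he3 h11 h12 h13
  field_simp
  ring_nf
  linear_combination (x1 * b1 * x2 * x3 ^ 2) * hαβ2 + (x1 * b1 * x2 ^ 2 * x3) * hαβ1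
end

section
/- Suppose e₁ = e₂ = e₃ = 0 and suppose β, γ ∈ ℝ satisfy b₁β + b₂γ = 0 and a₁ᵢβ + a₂ᵢγ = 0 for i = 1, 2, 3 (in particular this holds for suitable nonzero β, γ when (b₁, a₁₁, a₁₂, a₁₃) = λ(b₂, a₂₁, a₂₂, a₂₃) for some λ ∈ ℝ). Then the function H(x₁,x₂,x₃) = x₁^(β)·x₂^(γ) is a first integral of the three-dimensional Lotka–Volterra system with constant terms on the open positive octant {(x₁,x₂,x₃) : x₁ > 0, x₂ > 0, x₃ > 0}. -/
/-- Lemma 5, case 5: with `e₁ = e₂ = e₃ = 0` and `β, γ` solving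
`b₁β + b₂γ = 0` and `a₁ᵢβ + a₂ᵢγ = 0` for `i = 1,2,3`, the function
`H = x₁^β x₂^γ` is a first integral of the 3D LV system on the positive octant. -/
theorem stmt_19 (b1 b2 b3 a11 a12 a13 a21 a22 a23 a31 a32 a33 e1 e2 e3 β γ : ℝ)
    (he1 : e1 = 0) (he2 : e2 = 0) (he3 : e3 = 0)
    (hb : b1 * β + b2 * γ = 0)
    (h1 : a11 * β + a21 * γ = 0)
    (h2 : a12 * β + a22 * γ = 0)
    (h3 : a13 * β + a23 * γ = 0) :
    ∀ x1 x2 x3 : ℝ, 0 < x1 → 0 < x2 → 0 < x3 →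
      (x1 * (b1 + a11 * x1 + a12 * x2 + a13 * x3) + e1) *
        deriv (fun t => t ^ β * x2 ^ γ) x1 +
      (x2 * (b2 + a21 * x1 + a22 * x2 + a23 * x3) + e2) *
        deriv (fun t => x1 ^ β * t ^ γ) x2 +
      (x3 * (b3 + a31 * x1 + a32 * x2 + a33 * x3) + e3) *
        deriv (fun t => x1 ^ β * x2 ^ γ) x3 = 0 := by
  intro x1 x2 x3 hx1 hx2 hx3
  have d1 : deriv (fun t : ℝ => t ^ β * x2 ^ γ) x1 = β * x1 ^ (β - 1) * x2 ^ γ := by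
    have h := ((Real.hasDerivAt_rpow_const (x := x1) (p := β) (Or.inl hx1.ne')).mul_const
      (x2 ^ γ)).deriv
    simpa using h
  have d2 : deriv (fun t : ℝ => x1 ^ β * t ^ γ) x2 = x1 ^ β * (γ * x2 ^ (γ - 1)) := by
    have h := ((Real.hasDerivAt_rpow_const (x := x2) (p := γ) (Or.inl hx2.ne')).const_mul
      (x1 ^ β)).deriv
    simpa using h
  have d3 : deriv (fun _ : ℝ => x1 ^ β * x2 ^ γ) x3 = 0 := deriv_const _ _
  rw [d1, d2, d3, he1, he2, he3]
  have e1' : x1 * x1 ^ (β - 1) = x1 ^ β := by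
    rw [Real.rpow_sub_one hx1.ne']
    field_simp
  have e2' : x2 * x2 ^ (γ - 1) = x2 ^ γ := by
    rw [Real.rpow_sub_one hx2.ne']
    field_simp
  have key : (b1 + a11 * x1 + a12 * x2 + a13 * x3) * β
      + (b2 + a21 * x1 + a22 * x2 + a23 * x3) * γ = 0 := by nlinarith [hb, h1, h2, h3]
  calc (x1 * (b1 + a11 * x1 + a12 * x2 + a13 * x3) + 0) * (β * x1 ^ (β - 1) * x2 ^ γ) +
        (x2 * (b2 + a21 * x1 + a22 * x2 + a23 * x3) + 0) * (x1 ^ β * (γ * x2 ^ (γ - 1))) +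
        (x3 * (b3 + a31 * x1 + a32 * x2 + a33 * x3) + 0) * 0
      = ((b1 + a11 * x1 + a12 * x2 + a13 * x3) * β
          + (b2 + a21 * x1 + a22 * x2 + a23 * x3) * γ) * (x1 ^ β * x2 ^ γ) := by
        rw [← e1', ← e2']; ring
    _ = 0 := by rw [key]; ring
end
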